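/- (Part of Theorem 4.1.) Let (D1, M) be a consistent periodic first-derivative SBP operator (M symmetric positive definite and diagonal, M·D1 + D1ᵀ·M = 0, D1·𝟙 = 0) and D2 a consistent periodic second-derivative SBP operator with the same diagonal mass matrix M (M·D2 = −A2, A2 symmetric positive semidefinite, D2·𝟙 = 0). Let η, u : ℝ → ℝ^m be differentiable and satisfy ∂ₜη = −(I − D2)⁻¹·D1·(u + η∘u), ∂ₜu = −(I − D2)⁻¹·(D1·η + u∘(D1·u)) for all t. Then the discrete total mass of u, namely 𝟙ᵀ·M·u(t), is constant in t. -/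

import Mathlib

open Matrix

lemma dot_hasDerivAt {m : ℕ} (c v : Fin m → ℝ) (u : ℝ → Fin m → ℝ) (t : ℝ)
    (hu : HasDerivAt u v t) : HasDerivAt (fun s => c ⬝ᵥ u s) (c ⬝ᵥ v) t := by
  simp only [dotProduct]
  exact HasDerivAt.fun_sum fun j _ => HasDerivAt.const_mul (c j) ((hasDerivAt_pi.mp hu) j)

lemma diag_mulVec_apply {m : ℕ} {M : Matrix (Fin m) (Fin m) ℝ} (hMdiag : M.IsDiag)
    (x : Fin m → ℝ) (i : Fin m) : (M *ᵥ x) i = M i i * x i := by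
  simp only [mulVec, dotProduct]
  rw [Finset.sum_eq_single i]
  · intro j _ hj
    rw [hMdiag hj.symm, zero_mul]
  · intro h; exact absurd (Finset.mem_univ i) h

/-- For the split-form BBM-BBM semidiscretization
`∂ₜη = −(I − D2)⁻¹ D1 (u + η∘u)`, `∂ₜu = −(I − D2)⁻¹ (D1 η + u∘(D1 u))`
with consistent periodic SBP operators `D1`, `D2` sharing a diagonal
symmetric positive definite mass matrix `M`, the discrete total mass
`𝟙ᵀ·M·u(t)` is constant in time. -/
theorem bbm_bbm_split_form_conserves_total_mass_u
    (m : ℕ) (D1 D2 M A2 : Matrix (Fin m) (Fin m) ℝ)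
    (hM : M.PosDef) (hMdiag : M.IsDiag)
    (hD1 : M * D1 + D1ᵀ * M = 0)
    (hD1cons : D1 *ᵥ (1 : Fin m → ℝ) = 0)
    (hA2 : A2.PosSemidef)
    (hD2 : M * D2 = -A2)
    (hD2cons : D2 *ᵥ (1 : Fin m → ℝ) = 0)
    (η u : ℝ → Fin m → ℝ)
    (hη : ∀ t, HasDerivAt η (-((1 - D2)⁻¹ *ᵥ (D1 *ᵥ (u t + η t * u t)))) t)
    (hu : ∀ t, HasDerivAt u (-((1 - D2)⁻¹ *ᵥ (D1 *ᵥ η t + u t * (D1 *ᵥ u t)))) t) :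
    ∀ t₁ t₂ : ℝ,
      (1 : Fin m → ℝ) ⬝ᵥ (M *ᵥ u t₁) = (1 : Fin m → ℝ) ⬝ᵥ (M *ᵥ u t₂) := by
  have hMsymm : Mᵀ = M := hMdiag.isSymm
  have hA2symm : A2ᵀ = A2 := hA2.isHermitian
  set c : Fin m → ℝ := M *ᵥ (1 : Fin m → ℝ) with hc_def
  -- 1 ⬝ᵥ (M *ᵥ w) = c ⬝ᵥ w
  have honeM : ∀ w : Fin m → ℝ, (1 : Fin m → ℝ) ⬝ᵥ (M *ᵥ w) = c ⬝ᵥ w := by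
    intro w
    simp only [dotProduct, Pi.one_apply, one_mul, hc_def]
    apply Finset.sum_congr rfl
    intro i _
    rw [diag_mulVec_apply hMdiag, diag_mulVec_apply hMdiag, Pi.one_apply, mul_one]
  -- A2 annihilates 1
  have hA2one : A2 *ᵥ (1 : Fin m → ℝ) = 0 := by
    have h : (M * D2) *ᵥ (1 : Fin m → ℝ) = -(A2 *ᵥ (1 : Fin m → ℝ)) := by
      rw [hD2, neg_mulVec]
    rw [← mulVec_mulVec, hD2cons, mulVec_zero] at h
    exact neg_eq_zero.mp h.symm
  -- M(1 - D2) = M + A2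
  have hMD2 : M * (1 - D2) = M + A2 := by
    rw [mul_sub, mul_one, hD2, sub_neg_eq_add]
  -- (1 - D2) is invertible
  have hdet : IsUnit (1 - D2 : Matrix (Fin m) (Fin m) ℝ).det := by
    have hpd : (M + A2).PosDef := hM.add_posSemidef hA2
    have h1 : IsUnit (M * (1 - D2)).det := by
      rw [hMD2]; exact isUnit_iff_ne_zero.mpr hpd.det_pos.ne'
    rw [det_mul] at h1
    exact isUnit_of_mul_isUnit_right h1
  -- (1 - D2)ᵀ fixes c
  have hfix : (1 - D2)ᵀ *ᵥ c = c := by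
    have ht : (1 - D2)ᵀ * M = M + A2 := by
      have h := congrArg transpose hMD2
      rw [transpose_mul, hMsymm, transpose_add, hMsymm, hA2symm] at h
      exact h
    rw [hc_def, mulVec_mulVec, ht, add_mulVec, hA2one, add_zero]
  -- ((1 - D2)⁻¹)ᵀ fixes c
  have hfixinv : ((1 - D2)⁻¹)ᵀ *ᵥ c = c := by
    conv_lhs => rw [← hfix]
    rw [mulVec_mulVec, ← transpose_mul, Matrix.mul_nonsing_inv _ hdet, transpose_one, one_mulVec]
  -- c ⬝ᵥ ((1-D2)⁻¹ *ᵥ w) = c ⬝ᵥ w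
  have hcinv : ∀ w : Fin m → ℝ, c ⬝ᵥ ((1 - D2)⁻¹ *ᵥ w) = c ⬝ᵥ w := by
    intro w
    rw [dotProduct_mulVec, ← mulVec_transpose, hfixinv]
  -- c ⬝ᵥ (D1 *ᵥ w) = 0
  have hD1M : D1ᵀ * M = -(M * D1) := eq_neg_of_add_eq_zero_right hD1
  have hcD1 : ∀ w : Fin m → ℝ, c ⬝ᵥ (D1 *ᵥ w) = 0 := by
    intro w
    rw [dotProduct_mulVec, ← mulVec_transpose]
    have h0 : D1ᵀ *ᵥ c = 0 := by
      rw [hc_def, mulVec_mulVec, hD1M, neg_mulVec, ← mulVec_mulVec, hD1cons,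
        mulVec_zero, neg_zero]
    rw [h0, zero_dotProduct]
  -- c ⬝ᵥ (x * (D1 *ᵥ x)) = 0  (skew-symmetry of M D1)
  have hquad : ∀ x : Fin m → ℝ, c ⬝ᵥ (x * (D1 *ᵥ x)) = 0 := by
    intro x
    have hstep : c ⬝ᵥ (x * (D1 *ᵥ x)) = x ⬝ᵥ ((M * D1) *ᵥ x) := by
      rw [← mulVec_mulVec]
      simp only [dotProduct, hc_def, Pi.mul_apply]
      apply Finset.sum_congr rfl
      intro i _
      rw [diag_mulVec_apply hMdiag, diag_mulVec_apply hMdiag, Pi.one_apply, mul_one]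
      ring
    have hskew : (M * D1)ᵀ = -(M * D1) := by
      rw [transpose_mul, hMsymm, hD1M]
    have hs : x ⬝ᵥ ((M * D1) *ᵥ x) = -(x ⬝ᵥ ((M * D1) *ᵥ x)) := by
      conv_lhs => rw [dotProduct_mulVec, ← mulVec_transpose, hskew,
        neg_mulVec, neg_dotProduct, dotProduct_comm]
    rw [hstep]
    linarith [hs]
  -- the function t ↦ c ⬝ᵥ u t has derivative 0
  have hderiv : ∀ t : ℝ, HasDerivAt (fun s => c ⬝ᵥ u s) 0 t := by
    intro t
    have h1 : HasDerivAt (fun s => c ⬝ᵥ u s)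
        (c ⬝ᵥ (-((1 - D2)⁻¹ *ᵥ (D1 *ᵥ η t + u t * (D1 *ᵥ u t))))) t :=
      dot_hasDerivAt c _ u t (hu t)
    have h2 : c ⬝ᵥ (-((1 - D2)⁻¹ *ᵥ (D1 *ᵥ η t + u t * (D1 *ᵥ u t)))) = 0 := by
      rw [dotProduct_neg, hcinv, dotProduct_add, hcD1, hquad, add_zero, neg_zero]
    rwa [h2] at h1
  have hconst : ∀ t₁ t₂ : ℝ, c ⬝ᵥ u t₁ = c ⬝ᵥ u t₂ := by
    intro t₁ t₂
    exact is_const_of_deriv_eq_zero (f := fun s => c ⬝ᵥ u s)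
      (fun s => (hderiv s).differentiableAt) (fun s => (hderiv s).deriv) t₁ t₂
  intro t₁ t₂
  rw [honeM, honeM]
  exact hconst t₁ t₂
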